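/- Gaussian likelihood ratio bound for prior alignment: let p be the density of N(μ₁, v²) and q the density of N(μ₂, v²) on ℝ. Then for any x, p(x)/q(x) = exp((μ₁ − μ₂)(2x − μ₁ − μ₂)/(2v²)), and for any event A, P_{X~p}(A) ≤ exp(|μ₁ − μ₂|·(|μ₁| + |μ₂| + 2M)/(2v²)) · P_{X~q}(A) + P_{X~p}(|X| > M) for any M > 0. -/

import Mathlib

open MeasureTheory ProbabilityTheory

lemma glrb_ratio (μ₁ μ₂ : ℝ) (v2 : NNReal) (hv : 0 < (v2 : ℝ)) (x : ℝ) :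
    gaussianPDFReal μ₁ v2 x / gaussianPDFReal μ₂ v2 x
      = Real.exp ((μ₁ - μ₂) * (2 * x - μ₁ - μ₂) / (2 * (v2 : ℝ))) := by
  have hs : (0:ℝ) < Real.sqrt (2 * Real.pi * v2) := by
    apply Real.sqrt_pos.2; positivity
  rw [gaussianPDFReal, gaussianPDFReal, mul_div_mul_left _ _ (by positivity : (Real.sqrt (2 * Real.pi * v2))⁻¹ ≠ 0),
    ← Real.exp_sub]
  congr 1
  field_simp
  ring

/-- Gaussian likelihood ratio bound for prior alignment.  Let `p` be the
density of `N(μ₁, v²)` and `q` the density of `N(μ₂, v²)`.  Then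
`p x / q x = exp((μ₁ − μ₂)(2x − μ₁ − μ₂)/(2v²))`, and for any event `A` and any `M > 0`,
`P_{X~p}(A) ≤ exp(|μ₁ − μ₂|(|μ₁| + |μ₂| + 2M)/(2v²)) · P_{X~q}(A) + P_{X~p}(|X| > M)`. -/
theorem gaussian_likelihood_ratio_bound
    (μ₁ μ₂ : ℝ) (v2 : NNReal) (hv : 0 < (v2 : ℝ)) :
    (∀ x : ℝ,
      gaussianPDFReal μ₁ v2 x / gaussianPDFReal μ₂ v2 x
        = Real.exp ((μ₁ - μ₂) * (2 * x - μ₁ - μ₂) / (2 * (v2 : ℝ)))) ∧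
    (∀ (A : Set ℝ), MeasurableSet A → ∀ M : ℝ, 0 < M →
      gaussianReal μ₁ v2 A
        ≤ ENNReal.ofReal
            (Real.exp (|μ₁ - μ₂| * (|μ₁| + |μ₂| + 2 * M) / (2 * (v2 : ℝ))))
            * gaussianReal μ₂ v2 A
          + gaussianReal μ₁ v2 {x : ℝ | M < |x|}) := by
  have hv0 : v2 ≠ 0 := by
    intro h; rw [h] at hv; simp at hv
  refine ⟨glrb_ratio μ₁ μ₂ v2 hv, ?_⟩
  intro A hA M hM
  set C : ℝ := Real.exp (|μ₁ - μ₂| * (|μ₁| + |μ₂| + 2 * M) / (2 * (v2 : ℝ))) with hC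
  -- pointwise bound on {|x| ≤ M}
  have key : ∀ x : ℝ, |x| ≤ M →
      gaussianPDF μ₁ v2 x ≤ ENNReal.ofReal C * gaussianPDF μ₂ v2 x := by
    intro x hx
    have hq : 0 < gaussianPDFReal μ₂ v2 x := gaussianPDFReal_pos _ _ _ hv0
    have hr := glrb_ratio μ₁ μ₂ v2 hv x
    have hp : gaussianPDFReal μ₁ v2 x
        = Real.exp ((μ₁ - μ₂) * (2 * x - μ₁ - μ₂) / (2 * (v2 : ℝ)))
          * gaussianPDFReal μ₂ v2 x := by
      rw [← hr]; field_simp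
    have hbound : (μ₁ - μ₂) * (2 * x - μ₁ - μ₂) / (2 * (v2 : ℝ))
        ≤ |μ₁ - μ₂| * (|μ₁| + |μ₂| + 2 * M) / (2 * (v2 : ℝ)) := by
      apply div_le_div_of_nonneg_right _ (by positivity)
      calc (μ₁ - μ₂) * (2 * x - μ₁ - μ₂) ≤ |(μ₁ - μ₂) * (2 * x - μ₁ - μ₂)| := le_abs_self _
        _ = |μ₁ - μ₂| * |2 * x - μ₁ - μ₂| := abs_mul _ _
        _ ≤ |μ₁ - μ₂| * (|μ₁| + |μ₂| + 2 * M) := by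
            apply mul_le_mul_of_nonneg_left _ (abs_nonneg _)
            calc |2 * x - μ₁ - μ₂| ≤ |2 * x| + |μ₁| + |μ₂| := by
                  calc |2 * x - μ₁ - μ₂| ≤ |2 * x - μ₁| + |μ₂| := abs_sub _ _
                    _ ≤ |2 * x| + |μ₁| + |μ₂| := by
                        have := abs_sub (2 * x) μ₁
                        linarith
              _ ≤ |μ₁| + |μ₂| + 2 * M := by
                  rw [abs_mul]
                  simp only [abs_two]
                  nlinarith [abs_nonneg x]
    have : gaussianPDFReal μ₁ v2 x ≤ C * gaussianPDFReal μ₂ v2 x := by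
      rw [hp, hC]
      apply mul_le_mul_of_nonneg_right (Real.exp_le_exp.2 hbound) hq.le
    calc gaussianPDF μ₁ v2 x = ENNReal.ofReal (gaussianPDFReal μ₁ v2 x) := rfl
      _ ≤ ENNReal.ofReal (C * gaussianPDFReal μ₂ v2 x) := ENNReal.ofReal_le_ofReal this
      _ = ENNReal.ofReal C * ENNReal.ofReal (gaussianPDFReal μ₂ v2 x) :=
          ENNReal.ofReal_mul (Real.exp_nonneg _)
      _ = ENNReal.ofReal C * gaussianPDF μ₂ v2 x := rfl
  have hB : MeasurableSet {x : ℝ | M < |x|} :=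
    measurableSet_lt measurable_const (measurable_id.abs)
  have hsplit : gaussianReal μ₁ v2 A
      ≤ gaussianReal μ₁ v2 (A ∩ {x : ℝ | ¬ M < |x|}) + gaussianReal μ₁ v2 {x : ℝ | M < |x|} := by
    calc gaussianReal μ₁ v2 A
        ≤ gaussianReal μ₁ v2 ((A ∩ {x : ℝ | ¬ M < |x|}) ∪ {x : ℝ | M < |x|}) := by
          apply measure_mono
          intro x hx
          by_cases h : M < |x|
          · exact Or.inr h
          · exact Or.inl ⟨hx, h⟩
      _ ≤ _ := measure_union_le _ _
  refine hsplit.trans (add_le_add_left ?_ _)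
  have hABm : MeasurableSet (A ∩ {x : ℝ | ¬ M < |x|}) := hA.inter hB.compl
  calc gaussianReal μ₁ v2 (A ∩ {x : ℝ | ¬ M < |x|})
      = ∫⁻ x in A ∩ {x : ℝ | ¬ M < |x|}, gaussianPDF μ₁ v2 x :=
        gaussianReal_apply _ hv0 _
    _ ≤ ∫⁻ x in A ∩ {x : ℝ | ¬ M < |x|}, ENNReal.ofReal C * gaussianPDF μ₂ v2 x := by
        apply setLIntegral_mono ((measurable_gaussianPDF μ₂ v2).const_mul _)
        intro x hx
        exact key x (not_lt.1 hx.2)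
    _ = ENNReal.ofReal C * ∫⁻ x in A ∩ {x : ℝ | ¬ M < |x|}, gaussianPDF μ₂ v2 x :=
        lintegral_const_mul _ (measurable_gaussianPDF _ _)
    _ = ENNReal.ofReal C * gaussianReal μ₂ v2 (A ∩ {x : ℝ | ¬ M < |x|}) := by
        rw [gaussianReal_apply _ hv0]
    _ ≤ ENNReal.ofReal C * gaussianReal μ₂ v2 A := by
        exact mul_le_mul_right (measure_mono Set.inter_subset_left) _
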